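/- Let c, ν be real numbers with c > 0, and let τ be a Young diagram. Then the set of Young diagrams μ satisfying (c/2)·|μ|² − (c/2)·|μ| − c·ν·|μ| − |μ|·|τ| + c·Σ_{k≥1} k·μ'_k − (c − 1)·Σ_{k≥1} k·μ_k − (3/2)·|τ|² − |τ|/2 + c·ν·|τ| − c·f(τ) ≤ 0 is finite. -/

import Mathlib

/-- The content of a Young diagram: `ct(μ) = Σ_{(i,j)∈μ} (j − i)`. -/
def ct (μ : YoungDiagram) : ℤ := ∑ c ∈ μ.cells, ((c.2 : ℤ) - (c.1 : ℤ))

/-- `f(μ) = (|μ|² − |μ|)/2 + ct(μ)`. -/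
def fY (μ : YoungDiagram) : ℚ :=
  (((μ.card : ℚ)) ^ 2 - (μ.card : ℚ)) / 2 + (ct μ : ℚ)

/-- `Σ_{k≥1} k·μ_k`, each cell of μ in (1-based) row k contributing k. -/
def wr (μ : YoungDiagram) : ℕ := ∑ c ∈ μ.cells, (c.1 + 1)

/-- `Σ_{k≥1} k·μ'_k`, each cell of μ in (1-based) column k contributing k. -/
def wc (μ : YoungDiagram) : ℕ := ∑ c ∈ μ.cells, (c.2 + 1)

lemma cell_lt_card (μ : YoungDiagram) {x : ℕ × ℕ} (hx : x ∈ μ.cells) :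
    x.1 < μ.card ∧ x.2 < μ.card := by
  obtain ⟨i, j⟩ := x
  rw [YoungDiagram.mem_cells] at hx
  constructor
  · have h1 : (Finset.range (i + 1)).image (fun k => (k, j)) ⊆ μ.cells := by
      intro y hy
      simp only [Finset.mem_image, Finset.mem_range, Nat.lt_succ_iff] at hy
      obtain ⟨k, hk, rfl⟩ := hy
      rw [YoungDiagram.mem_cells]
      exact μ.up_left_mem hk le_rfl hx
    have := Finset.card_le_card h1
    rwa [Finset.card_image_of_injective _ (fun a b h => by injection h),
      Finset.card_range, Nat.succ_le_iff] at this
  · have h1 : (Finset.range (j + 1)).image (fun k => (i, k)) ⊆ μ.cells := by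
      intro y hy
      simp only [Finset.mem_image, Finset.mem_range, Nat.lt_succ_iff] at hy
      obtain ⟨k, hk, rfl⟩ := hy
      rw [YoungDiagram.mem_cells]
      exact μ.up_left_mem le_rfl hk hx
    have := Finset.card_le_card h1
    rwa [Finset.card_image_of_injective _ (fun a b h => by injection h),
      Finset.card_range, Nat.succ_le_iff] at this

lemma finite_card_le (N : ℕ) : {μ : YoungDiagram | μ.card ≤ N}.Finite := by
  have hinj : Set.InjOn YoungDiagram.cells {μ : YoungDiagram | μ.card ≤ N} := by
    intro a _ b _ h
    exact YoungDiagram.ext h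
  apply Set.Finite.of_finite_image _ hinj
  apply Set.Finite.subset (Finset.finite_toSet ((Finset.range N ×ˢ Finset.range N).powerset))
  rintro _ ⟨μ, hμ, rfl⟩
  simp only [Finset.coe_powerset, Set.mem_preimage, Set.mem_powerset_iff, Finset.coe_subset]
  intro x hx
  obtain ⟨h1, h2⟩ := cell_lt_card μ hx
  simp only [Finset.mem_product, Finset.mem_range]
  exact ⟨h1.trans_le hμ, h2.trans_le hμ⟩

lemma two_wr_le (μ : YoungDiagram) : 2 * wr μ ≤ μ.card ^ 2 + μ.card := by
  classical
  set s := μ.cells with hs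
  set S : Finset ((ℕ × ℕ) × (ℕ × ℕ)) :=
    (s ×ˢ s).filter (fun p => p.2.2 = p.1.2 ∧ p.2.1 ≤ p.1.1) with hS
  have hfib : ∀ x ∈ s, (S.filter fun p => p.1 = x) =
      (Finset.range (x.1 + 1)).image (fun k => (x, (k, x.2))) := by
    intro x hx
    ext p
    simp only [hS, Finset.mem_filter, Finset.mem_product, Finset.mem_image,
      Finset.mem_range, Nat.lt_succ_iff]
    constructor
    · rintro ⟨⟨⟨hp1, hp2⟩, hcol, hle⟩, rfl⟩
      exact ⟨p.2.1, hle, by rw [← hcol]⟩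
    · rintro ⟨k, hk, rfl⟩
      refine ⟨⟨⟨hx, ?_⟩, rfl, hk⟩, rfl⟩
      rw [hs, YoungDiagram.mem_cells]
      exact μ.up_left_mem hk le_rfl ((YoungDiagram.mem_cells _).mp hx)
  have hScard : S.card = wr μ := by
    rw [Finset.card_eq_sum_card_fiberwise (f := Prod.fst) (t := s)
      (fun p hp => by simp only [hS, Finset.mem_coe, Finset.mem_filter, Finset.mem_product] at hp; exact hp.1.1)]
    unfold wr
    refine Finset.sum_congr rfl fun x hx => ?_
    rw [hfib x hx, Finset.card_image_of_injective _ (fun a b h => by injection h with h1 h2; injection h2),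
      Finset.card_range]
  set S' := S.image Prod.swap with hS'
  have hS'card : S'.card = S.card := Finset.card_image_of_injective _ Prod.swap_injective
  have hmemS : ∀ p, p ∈ S' ↔ Prod.swap p ∈ S := by
    intro p
    rw [hS']
    constructor
    · rintro hp
      obtain ⟨q, hq, rfl⟩ := Finset.mem_image.mp hp
      simpa using hq
    · intro hp
      exact Finset.mem_image.mpr ⟨Prod.swap p, hp, by simp⟩
  have hunion : S ∪ S' ⊆ s ×ˢ s := by
    intro p hp
    rcases Finset.mem_union.mp hp with hp | hp
    · exact Finset.mem_of_mem_filter _ hp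
    · rw [hmemS] at hp
      have := Finset.mem_of_mem_filter _ hp
      simp only [Finset.mem_product] at this ⊢
      exact ⟨this.2, this.1⟩
  have hinter : S ∩ S' ⊆ s.image (fun a => (a, a)) := by
    intro p hp
    rw [Finset.mem_inter, hmemS] at hp
    obtain ⟨h1, h2⟩ := hp
    simp only [hS, Finset.mem_filter, Finset.mem_product, Prod.fst_swap, Prod.snd_swap] at h1 h2
    have heq : p.2 = p.1 := Prod.ext (le_antisymm h1.2.2 h2.2.2) (h1.2.1)
    refine Finset.mem_image.mpr ⟨p.1, h1.1.1, ?_⟩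
    exact Prod.ext rfl heq.symm
  have := Finset.card_union_add_card_inter S S'
  have hle1 : (S ∪ S').card ≤ s.card ^ 2 + 0 := by
    simpa [sq] using Finset.card_le_card hunion
  have hle2 : (S ∩ S').card ≤ s.card := by
    refine (Finset.card_le_card hinter).trans ?_
    exact Finset.card_image_le
  calc 2 * wr μ = S.card + S'.card := by rw [hS'card, hScard]; ring
    _ = (S ∪ S').card + (S ∩ S').card := this.symm
    _ ≤ s.card ^ 2 + s.card := by omega
    _ = μ.card ^ 2 + μ.card := rfl

set_option maxHeartbeats 800000 in
/-- For real c > 0 and ν, and a Young diagram τ, the set of Young diagrams μ with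
(c/2)|μ|² − (c/2)|μ| − cν|μ| − |μ||τ| + c·Σk·μ'_k − (c−1)·Σk·μ_k
− (3/2)|τ|² − |τ|/2 + cν|τ| − c·f(τ) ≤ 0 is finite. -/
theorem stmt8 (c ν : ℝ) (hc : 0 < c) (τ : YoungDiagram) :
    {μ : YoungDiagram |
      c / 2 * (μ.card : ℝ) ^ 2 - c / 2 * (μ.card : ℝ) - c * ν * (μ.card : ℝ)
        - (μ.card : ℝ) * (τ.card : ℝ) + c * (wc μ : ℝ) - (c - 1) * (wr μ : ℝ)
        - 3 / 2 * (τ.card : ℝ) ^ 2 - (τ.card : ℝ) / 2 + c * ν * (τ.card : ℝ)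
        - c * (fY τ : ℝ) ≤ 0}.Finite := by
  set t : ℝ := (τ.card : ℝ) with ht
  set C : ℝ := 3 / 2 * t ^ 2 + t / 2 - c * ν * t + c * (fY τ : ℝ) with hC
  set p : ℝ := max (c - 1) 0 with hp
  have hp0 : 0 ≤ p := le_max_right _ _
  have hp1 : c - 1 ≤ p := le_max_left _ _
  set m : ℝ := c - p with hm
  have hm0 : 0 < m := by
    rcases le_total c 1 with h | h
    · have : p = 0 := max_eq_right (by linarith)
      rw [hm, this]; linarith
    · have : p = c - 1 := max_eq_left (by linarith)
      rw [hm, this]; linarith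
  set A : ℝ := c / 2 + c * ν + t + p / 2 with hA
  set R : ℝ := max (2 * (|A| + |C|) / m) 1 with hR
  obtain ⟨N, hN⟩ : ∃ N : ℕ, R ≤ (N : ℝ) := ⟨⌈R⌉₊, Nat.le_ceil R⟩
  apply Set.Finite.subset (finite_card_le N)
  intro μ hμ
  simp only [Set.mem_setOf_eq] at hμ ⊢
  set n : ℝ := (μ.card : ℝ) with hn
  have hn0 : 0 ≤ n := Nat.cast_nonneg _
  have hwc0 : (0 : ℝ) ≤ (wc μ : ℝ) := Nat.cast_nonneg _
  have hwr0 : (0 : ℝ) ≤ (wr μ : ℝ) := Nat.cast_nonneg _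
  have hwr2 : 2 * (wr μ : ℝ) ≤ n ^ 2 + n := by
    have := two_wr_le μ
    rw [hn]
    exact_mod_cast this
  have hμ' : c / 2 * n ^ 2 - c / 2 * n - c * ν * n - n * t + c * (wc μ : ℝ)
      - (c - 1) * (wr μ : ℝ) - C ≤ 0 := by
    rw [hC]; linarith [hμ]
  have h1 : 0 ≤ (p - (c - 1)) * (wr μ : ℝ) := mul_nonneg (by linarith) hwr0
  have h2 : 0 ≤ p * (n ^ 2 + n - 2 * (wr μ : ℝ)) := mul_nonneg hp0 (by linarith)
  have h3 : 0 ≤ c * (wc μ : ℝ) := mul_nonneg hc.le hwc0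
  have key : m / 2 * n ^ 2 ≤ A * n + C := by
    rw [hm, hA]; nlinarith [hμ', h1, h2, h3]
  have hnR : n ≤ R := by
    by_cases h0 : n ≤ 1
    · exact h0.trans (le_max_right _ _)
    · push_neg at h0
      have habs : m / 2 * n ^ 2 ≤ (|A| + |C|) * n := by
        have ha : A * n ≤ |A| * n := mul_le_mul_of_nonneg_right (le_abs_self A) hn0
        have hb : C ≤ |C| * n := by
          calc C ≤ |C| := le_abs_self C
            _ = |C| * 1 := by ring
            _ ≤ |C| * n := mul_le_mul_of_nonneg_left h0.le (abs_nonneg C)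
        calc m / 2 * n ^ 2 ≤ A * n + C := key
          _ ≤ |A| * n + |C| * n := by linarith
          _ = (|A| + |C|) * n := by ring
      have h4 : (m * n) * n ≤ (2 * (|A| + |C|)) * n := by
        have : m * n ^ 2 ≤ 2 * ((|A| + |C|) * n) := by nlinarith [habs]
        calc (m * n) * n = m * n ^ 2 := by ring
          _ ≤ 2 * ((|A| + |C|) * n) := this
          _ = (2 * (|A| + |C|)) * n := by ring
      have h5 : m * n ≤ 2 * (|A| + |C|) := le_of_mul_le_mul_right h4 (by linarith)
      have h6 : n ≤ 2 * (|A| + |C|) / m := (le_div_iff₀ hm0).mpr (by linarith)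
      exact h6.trans (le_max_left _ _)
  have h7 : n ≤ (N : ℝ) := hnR.trans hN
  rw [hn] at h7
  exact_mod_cast h7
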